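/- A compact metrizable space is a Δ-space if and only if it is countable. -/

import Mathlib

open Set Function Filter Topology

def IsDeltaSpace (X : Type*) [TopologicalSpace X] : Prop :=
  ∀ D : ℕ → Set X, (∀ n, D (n + 1) ⊆ D n) → (⋂ n, D n) = ∅ →
    ∃ V : ℕ → Set X, (∀ n, IsOpen (V n)) ∧ (∀ n, V (n + 1) ⊆ V n) ∧
      (⋂ n, V n) = ∅ ∧ ∀ n, D n ⊆ V n

/-- Δ-ness is inherited along continuous injections. -/
lemma isDeltaSpace_of_continuous_injective {X Y : Type*} [TopologicalSpace X]
    [TopologicalSpace Y] (hX : IsDeltaSpace X) (g : Y → X) (hc : Continuous g)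
    (hg : Function.Injective g) : IsDeltaSpace Y := by
  intro D hdec hint
  obtain ⟨V, hVo, hVdec, hVint, hDV⟩ := hX (fun n => g '' D n)
    (fun n => Set.image_mono (f := g) (hdec n))
    (by rw [← hg.injOn.image_iInter_eq, hint, Set.image_empty])
  refine ⟨fun n => g ⁻¹' V n, fun n => (hVo n).preimage hc,
    fun n => Set.preimage_mono (hVdec n), ?_,
    fun n => (Set.subset_preimage_image g (D n)).trans (Set.preimage_mono (hDV n))⟩
  rw [← Set.preimage_iInter, hVint, Set.preimage_empty]

/-- Every countable T1 space is a Δ-space. -/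
lemma isDeltaSpace_of_countable {X : Type*} [TopologicalSpace X] [T1Space X] [Countable X] :
    IsDeltaSpace X := by
  intro D hdec hint
  have hanti : Antitone D := antitone_nat_of_succ_le hdec
  rcases isEmpty_or_nonempty X with hX | hX
  · refine ⟨fun _ => ∅, fun _ => isOpen_empty, fun _ => subset_rfl, Set.iInter_const ∅, fun n => by
      rw [Set.eq_empty_of_isEmpty (D n)]⟩
  obtain ⟨f, hf⟩ := exists_surjective_nat X
  refine ⟨fun n => {z | ∀ i ≤ n, f i ∉ D n → f i ≠ z}, ?_, ?_, ?_, ?_⟩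
  · intro n
    show IsOpen {z | ∀ i ≤ n, f i ∉ D n → f i ≠ z}
    have : {z | ∀ i ≤ n, f i ∉ D n → f i ≠ z} = (f '' {i | i ≤ n ∧ f i ∉ D n})ᶜ := by
      ext z
      simp only [Set.mem_setOf_eq, Set.mem_compl_iff, Set.mem_image, not_exists]
      constructor
      · rintro h i ⟨⟨hi, hni⟩, rfl⟩
        exact h i hi hni rfl
      · intro h i hi hni hz
        exact h i ⟨⟨hi, hni⟩, hz⟩
    rw [this]
    exact (Set.Finite.image f ((Set.finite_Iic n).subset (fun i hi => hi.1))).isClosed.isOpen_compl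
  · intro n z hz i hi hni
    exact hz i (hi.trans (Nat.le_succ n)) (fun h => hni (hdec n h))
  · rw [Set.eq_empty_iff_forall_notMem]
    intro z hz
    obtain ⟨k, hk⟩ := hf z
    have hz' : z ∉ ⋂ n, D n := by rw [hint]; exact Set.notMem_empty z
    rw [Set.mem_iInter] at hz'
    push_neg at hz'
    obtain ⟨m, hm⟩ := hz'
    have h1 : f k ∉ D (max k m) := fun h => hm (hanti (le_max_right k m) (hk ▸ h))
    exact (Set.mem_iInter.1 hz (max k m)) k (le_max_left k m) h1 hk
  · intro n x hx i _ hni hz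
    exact hni (hz ▸ hx)

lemma cantor_neBot (x : ℕ → Bool) : Filter.NeBot (𝓝[≠] x) := by
  have hy : Tendsto (fun n => Function.update x n (!x n)) atTop (𝓝[≠] x) := by
    apply tendsto_nhdsWithin_of_tendsto_nhds_of_eventually_within
    · rw [tendsto_pi_nhds]
      intro i
      have h : ∀ᶠ n in atTop, (fun _ => x i) n = Function.update x n (!x n) i := by
        filter_upwards [eventually_gt_atTop i] with n hn
        exact (Function.update_of_ne (by omega) _ _).symm
      exact tendsto_const_nhds.congr' h
    · refine Filter.Eventually.of_forall fun n => ?_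
      intro h
      have := congrFun (Set.mem_singleton_iff.mp h) n
      rw [Function.update_self] at this
      cases x n <;> simp_all
  exact hy.neBot

lemma not_isDeltaSpace_cantor : ¬ IsDeltaSpace (ℕ → Bool) := by
  intro h
  haveI : ∀ x : ℕ → Bool, Filter.NeBot (𝓝[≠] x) := cantor_neBot
  obtain ⟨Q, hQc, hQd⟩ := TopologicalSpace.exists_countable_dense (ℕ → Bool)
  obtain ⟨f, hfQ⟩ := Set.Countable.exists_eq_range hQc hQd.nonempty
  obtain ⟨V, hVo, _, hVint, hDV⟩ := h (fun n => Q \ f '' (Set.Iio n))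
    (fun n => Set.diff_subset_diff_right
      (Set.image_mono (f := f) (Set.Iio_subset_Iio (Nat.le_succ n))))
    (by
      rw [Set.eq_empty_iff_forall_notMem]
      intro z hz
      rw [Set.mem_iInter] at hz
      obtain ⟨k, hk⟩ := by rw [hfQ] at *; exact (hz 0).1
      exact (hz (k + 1)).2 ⟨k, Nat.lt_succ_self k, hk⟩)
  have hVd : ∀ n, Dense (V n) :=
    fun n => Dense.mono (hDV n) (hQd.diff_finite ((Set.finite_Iio n).image f))
  have := dense_iInter_of_isOpen hVo hVd
  rw [hVint] at this
  exact (this.nonempty).ne_empty rfl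

theorem compact_metrizable_isDeltaSpace_iff_countable (X : Type*) [TopologicalSpace X]
    [CompactSpace X] [TopologicalSpace.MetrizableSpace X] :
    IsDeltaSpace X ↔ Countable X := by
  letI := TopologicalSpace.metrizableSpaceMetric X
  constructor
  · intro h
    by_contra hc
    haveI : PolishSpace X := inferInstance
    have hunc : ¬ (Set.univ : Set X).Countable := fun hcc => hc (Set.countable_univ_iff.mp hcc)
    obtain ⟨g, -, hgc, hgi⟩ := isClosed_univ.exists_nat_bool_injection_of_not_countable hunc
    exact not_isDeltaSpace_cantor (isDeltaSpace_of_continuous_injective h g hgc hgi)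
  · intro hc
    exact isDeltaSpace_of_countable
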